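/- arXiv:0909.4366 — 7 statements merged into one kernel-verified Lean document; each statement's English description precedes it below -/
import Mathlib

section
/- Let Y(t) be the fundamental matrix solution of ẏ = A(t)y with Y(0) = I, where A is continuous and T-periodic. Suppose S is an invertible n×n matrix such that S⁻¹Y(T)S is block upper-triangular with (1,1)-entry 1, zeros in the rest of the first row and first column, and lower-right (n-1)×(n-1) block A₀ with det(A₀ - I) ≠ 0. If z₁(t) is a nontrivial T-periodic solution of the adjoint system ż = -A(t)ᵀz, then ⟨z₁(0), S e₁⟩ ≠ 0, where S e₁ is the first column of S. -/
open Matrix Set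

lemma aux_dot_const {n : ℕ} (A : ℝ → Matrix (Fin n) (Fin n) ℝ)
    (Y : ℝ → Matrix (Fin n) (Fin n) ℝ)
    (hY : ∀ (v : Fin n → ℝ) (t : ℝ),
      HasDerivAt (fun s => (Y s).mulVec v) ((A t).mulVec ((Y t).mulVec v)) t)
    (z : ℝ → Fin n → ℝ)
    (hz : ∀ t, HasDerivAt z (-(A t)ᵀ.mulVec (z t)) t)
    (v : Fin n → ℝ) (t : ℝ) :
    z t ⬝ᵥ (Y t).mulVec v = z 0 ⬝ᵥ (Y 0).mulVec v := by
  have key : ∀ s : ℝ, HasDerivAt (fun r => z r ⬝ᵥ (Y r).mulVec v) 0 s := by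
    intro s
    have h1 : ∀ i, HasDerivAt (fun r => z r i) ((-(A s)ᵀ.mulVec (z s)) i) s :=
      fun i => (hasDerivAt_pi.mp (hz s)) i
    have h2 : ∀ i, HasDerivAt (fun r => (Y r).mulVec v i) ((A s).mulVec ((Y s).mulVec v) i) s :=
      fun i => (hasDerivAt_pi.mp (hY v s)) i
    have hsum := HasDerivAt.sum (u := Finset.univ)
      (fun i _ => ((h1 i).mul (h2 i)))
    have hzero : ∑ i : Fin n, ((-(A s)ᵀ.mulVec (z s)) i * (Y s).mulVec v i
        + z s i * (A s).mulVec ((Y s).mulVec v) i) = 0 := by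
      rw [Finset.sum_add_distrib]
      have e1 : ∑ i : Fin n, (-(A s)ᵀ.mulVec (z s)) i * (Y s).mulVec v i
          = -((A s)ᵀ.mulVec (z s) ⬝ᵥ (Y s).mulVec v) := by
        simp [dotProduct, Finset.sum_neg_distrib]
      have e2 : ∑ i : Fin n, z s i * (A s).mulVec ((Y s).mulVec v) i
          = z s ⬝ᵥ (A s).mulVec ((Y s).mulVec v) := rfl
      rw [e1, e2, Matrix.mulVec_transpose, Matrix.dotProduct_mulVec,
        Matrix.dotProduct_mulVec, Matrix.dotProduct_mulVec]
      ring
    rw [hzero] at hsum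
    have heq2 : (fun r => z r ⬝ᵥ (Y r).mulVec v)
        = ∑ i, (fun r => z r i) * fun r => (Y r).mulVec v i := by
      ext r
      simp [dotProduct, Finset.sum_apply]
    rw [heq2]; exact hsum
  have hconst := is_const_of_deriv_eq_zero (f := fun r => z r ⬝ᵥ (Y r).mulVec v)
    (fun s => (key s).differentiableAt) (fun s => (key s).deriv) t 0
  exact hconst

lemma aux_zero {n : ℕ} (T : ℝ) (hT : 0 < T)
    (A : ℝ → Matrix (Fin n) (Fin n) ℝ)
    (hAcont : Continuous fun p : ℝ × (Fin n → ℝ) => (A p.1).mulVec p.2)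
    (hAper : ∀ t, A (t + T) = A t)
    (z : ℝ → Fin n → ℝ)
    (hz : ∀ t, HasDerivAt z (-(A t)ᵀ.mulVec (z t)) t)
    (hz0 : z 0 = 0) : z = 0 := by
  -- continuity of A
  have hA : Continuous A := by
    apply continuous_pi; intro i; apply continuous_pi; intro j
    have : (fun t => A t i j) = fun t => ((A t).mulVec (Pi.single j 1)) i := by
      ext t; simp [Matrix.mulVec_single]
    rw [this]
    exact (continuous_apply i).comp
      (hAcont.comp (continuous_id.prodMk continuous_const))
  -- the linear vector fields as CLMs
  set L : ℝ → ((Fin n → ℝ) →L[ℝ] (Fin n → ℝ)) :=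
    fun t => LinearMap.toContinuousLinearMap (Matrix.mulVecLin (-(A t)ᵀ)) with hLdef
  have hLcont : Continuous L := by
    have h1 : Continuous fun M : Matrix (Fin n) (Fin n) ℝ =>
        (LinearMap.toContinuousLinearMap (Matrix.mulVecLin M)) :=
      LinearMap.continuous_of_finiteDimensional
        ((LinearMap.toContinuousLinearMap :
          ((Fin n → ℝ) →ₗ[ℝ] (Fin n → ℝ)) ≃ₗ[ℝ] _).toLinearMap.comp
          (Matrix.toLin' : Matrix (Fin n) (Fin n) ℝ ≃ₗ[ℝ] _).toLinearMap)
    exact h1.comp (hA.matrix_transpose.neg)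
  have hLper : Function.Periodic L T := fun t => by simp [hLdef, hAper t]
  obtain ⟨C, hC⟩ := (isCompact_Icc (a := (0:ℝ)) (b := T)).exists_bound_of_continuousOn
    hLcont.continuousOn
  set K : NNReal := ⟨max C 0, le_max_right _ _⟩ with hKdef
  have hKbound : ∀ t, ‖L t‖₊ ≤ K := by
    intro t
    obtain ⟨y, hy, hEq⟩ := hLper.exists_mem_Ico₀ hT t
    have h2 : ‖L t‖ ≤ C := hEq ▸ hC y (Ico_subset_Icc_self hy)
    rw [← NNReal.coe_le_coe]
    exact le_trans h2 (le_max_left _ _)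
  have hLip : ∀ t, LipschitzWith K (fun x => -(A t)ᵀ.mulVec x) := by
    intro t
    have h3 := (L t).lipschitz.weaken (hKbound t)
    have heq : (fun x => -(A t)ᵀ.mulVec x) = ⇑(L t) := by
      ext x i
      simp [hLdef, Matrix.neg_mulVec, Matrix.mulVec_transpose]
    rw [heq]; exact h3
  -- uniqueness
  funext t'
  have habs : t' ∈ Ioo (-(|t'| + 1)) (|t'| + 1) :=
    ⟨by nlinarith [neg_abs_le t', abs_nonneg t'], by nlinarith [le_abs_self t']⟩
  have h0 : (0:ℝ) ∈ Ioo (-(|t'| + 1)) (|t'| + 1) :=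
    ⟨by nlinarith [abs_nonneg t'], by nlinarith [abs_nonneg t']⟩
  have := ODE_solution_unique_of_mem_Ioo (v := fun t x => -(A t)ᵀ.mulVec x)
    (s := fun _ => univ) (K := K) (f := z) (g := fun _ => 0) (fun t _ => (hLip t).lipschitzOnWith) h0
    (fun t _ => ⟨hz t, trivial⟩)
    (fun t _ => ⟨by simpa using hasDerivAt_const t (0 : Fin n → ℝ), trivial⟩)
    hz0
  exact this habs

/-- If the monodromy matrix `Y(T)` is conjugated by `S` into a block form with
`(1,1)` entry `1`, zeros elsewhere in the first row and column, and lower-right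
block `A₀` with `det (A₀ - I) ≠ 0`, then every nontrivial `T`-periodic solution
`z₁` of the adjoint system satisfies `⟨z₁(0), S e₁⟩ ≠ 0`. -/
theorem adjoint_periodic_not_orthogonal_first_column
    {m : ℕ} (T : ℝ) (hT : 0 < T)
    (A : ℝ → Matrix (Fin (m + 1)) (Fin (m + 1)) ℝ)
    (hAcont : Continuous fun p : ℝ × (Fin (m + 1) → ℝ) => (A p.1).mulVec p.2)
    (hAper : ∀ t, A (t + T) = A t)
    (Y : ℝ → Matrix (Fin (m + 1)) (Fin (m + 1)) ℝ)
    (hY : ∀ (v : Fin (m + 1) → ℝ) (t : ℝ),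
      HasDerivAt (fun s => (Y s).mulVec v) ((A t).mulVec ((Y t).mulVec v)) t)
    (hY0 : Y 0 = 1)
    (S : Matrix (Fin (m + 1)) (Fin (m + 1)) ℝ) (hS : IsUnit S.det)
    (A₀ : Matrix (Fin m) (Fin m) ℝ)
    (hblock11 : (S⁻¹ * Y T * S) 0 0 = 1)
    (hblockrow : ∀ j : Fin m, (S⁻¹ * Y T * S) 0 j.succ = 0)
    (hblockcol : ∀ i : Fin m, (S⁻¹ * Y T * S) i.succ 0 = 0)
    (hblockA : ∀ i j : Fin m, (S⁻¹ * Y T * S) i.succ j.succ = A₀ i j)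
    (hA₀ : (A₀ - 1).det ≠ 0)
    (z₁ : ℝ → Fin (m + 1) → ℝ)
    (hz₁ : ∀ t, HasDerivAt z₁ (-(A t)ᵀ.mulVec (z₁ t)) t)
    (hz₁per : ∀ t, z₁ (t + T) = z₁ t)
    (hz₁ne : z₁ ≠ 0) :
    z₁ 0 ⬝ᵥ (fun i => S i 0) ≠ 0 := by
  intro hcontra
  have hzT : z₁ T = z₁ 0 := by simpa using hz₁per 0
  -- z₁ 0 is a fixed row vector of the monodromy matrix
  have hfix : vecMul (z₁ 0) (Y T) = z₁ 0 := by
    funext j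
    have h := aux_dot_const A Y hY z₁ hz₁ (Pi.single j 1) T
    rw [hY0, hzT] at h
    have e1 : vecMul (z₁ 0) (Y T) j = z₁ 0 ⬝ᵥ (Y T).mulVec (Pi.single j 1) := by
      simp [vecMul, dotProduct, Matrix.mulVec_single, mul_comm]
    rw [e1, h]
    simp [Matrix.one_mulVec, dotProduct, Pi.single_apply, Matrix.one_apply, mul_ite]
  set M := S⁻¹ * Y T * S with hM
  set w := vecMul (z₁ 0) S with hw
  have hw0 : w 0 = 0 := by
    rw [hw]
    simpa [vecMul, dotProduct] using hcontra
  have hwM : vecMul w M = w := by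
    rw [hw, hM, Matrix.vecMul_vecMul]
    have : S * (S⁻¹ * Y T * S) = Y T * S := by
      rw [show S⁻¹ * Y T * S = S⁻¹ * (Y T * S) from Matrix.mul_assoc _ _ _, ← Matrix.mul_assoc,
        Matrix.mul_nonsing_inv S hS, Matrix.one_mul]
    rw [this, ← Matrix.vecMul_vecMul, hfix]
  set u : Fin m → ℝ := fun j => w j.succ with hu
  have huA : ∀ j, vecMul u A₀ j = u j := by
    intro j
    have h := congrFun hwM j.succ
    have e : vecMul w M j.succ
        = w 0 * M 0 j.succ + ∑ i : Fin m, w i.succ * M i.succ j.succ := by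
      simp [vecMul, dotProduct, Fin.sum_univ_succ]
    rw [e, hw0, zero_mul, zero_add] at h
    calc vecMul u A₀ j = ∑ i : Fin m, w i.succ * M i.succ j.succ := by
          simp [vecMul, dotProduct, hu, hblockA]
      _ = u j := h
  have hA₀unit : IsUnit (A₀ - 1).det := isUnit_iff_ne_zero.mpr hA₀
  have huzero : u = 0 := by
    have h1 : vecMul u (A₀ - 1) = 0 := by
      funext j
      have : vecMul u (A₀ - 1) j = vecMul u A₀ j - u j := by
        simp [vecMul, dotProduct, Matrix.sub_apply, mul_sub, Finset.sum_sub_distrib,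
          Matrix.one_apply, mul_ite]
      rw [this, huA]
      simp
    have h2 := congrArg (fun v => vecMul v (A₀ - 1)⁻¹) h1
    simpa [Matrix.vecMul_vecMul, Matrix.mul_nonsing_inv _ hA₀unit] using h2
  have hwzero : w = 0 := by
    funext i
    refine Fin.cases ?_ ?_ i
    · exact hw0
    · intro j; exact congrFun huzero j
  have hz0 : z₁ 0 = 0 := by
    have h2 := congrArg (fun v => vecMul v S⁻¹) hwzero
    simpa [hw, Matrix.vecMul_vecMul, Matrix.mul_nonsing_inv S hS] using h2
  exact hz₁ne (aux_zero T hT A hAcont hAper z₁ hz₁ hz0)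
end

section
/- The functions y₁(t) = i e^{it} and y₂(t) = (-1+i)e^{(-2+i)t} are solutions of the real-linear equation ẏ = (-1+2i)y + (-1+i)e^{2it}ȳ on ℂ, and consequently for T = 2Nπ (N a positive integer) this equation has Floquet multipliers μ₁ = 1 and μ₂ = e^{-2T}. -/
open Complex

/-- derivative of `t ↦ exp (c t)` for real `t`. -/
lemma hasDerivAt_cexp_real (c : ℂ) (t : ℝ) :
    HasDerivAt (fun s : ℝ => Complex.exp (c * s)) (c * Complex.exp (c * t)) t := by
  have h1 : HasDerivAt (fun s : ℝ => (s : ℂ)) 1 t := Complex.ofRealCLM.hasDerivAt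
  have h2 : HasDerivAt (fun s : ℝ => c * (s : ℂ)) c t := by
    simpa using h1.const_mul c
  simpa [mul_comm] using h2.cexp

lemma conj_cexp_real (c : ℂ) (t : ℝ) :
    (starRingEnd ℂ) (Complex.exp (c * t)) = Complex.exp ((starRingEnd ℂ) c * t) := by
  rw [← Complex.exp_conj]
  simp

/-- `y₁(t) = i e^{it}` and `y₂(t) = (-1+i)e^{(-2+i)t}` solve the real-linear equation
`ẏ = (-1+2i)y + (-1+i)e^{2it}ȳ`, and for `T = 2Nπ` they are Floquet solutions with
multipliers `μ₁ = 1` and `μ₂ = e^{-2T}`, respectively. -/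
theorem floquet_solutions_example :
    let y₁ : ℝ → ℂ := fun t => I * Complex.exp (I * t)
    let y₂ : ℝ → ℂ := fun t => (-1 + I) * Complex.exp ((-2 + I) * t)
    (∀ t : ℝ, HasDerivAt y₁
      ((-1 + 2 * I) * y₁ t + (-1 + I) * Complex.exp (2 * I * t) * (starRingEnd ℂ) (y₁ t)) t) ∧
    (∀ t : ℝ, HasDerivAt y₂
      ((-1 + 2 * I) * y₂ t + (-1 + I) * Complex.exp (2 * I * t) * (starRingEnd ℂ) (y₂ t)) t) ∧
    (∀ N : ℕ, 0 < N →
      (∀ t : ℝ, y₁ (t + 2 * N * Real.pi) = 1 * y₁ t) ∧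
      (∀ t : ℝ, y₂ (t + 2 * N * Real.pi) = (Real.exp (-2 * (2 * N * Real.pi)) : ℂ) * y₂ t)) := by
  intro y₁ y₂
  refine ⟨?_, ?_, ?_⟩
  · intro t
    have h := (hasDerivAt_cexp_real I t).const_mul I
    convert h using 1
    show (-1 + 2 * I) * (I * Complex.exp (I * t)) +
        (-1 + I) * Complex.exp (2 * I * t) * (starRingEnd ℂ) (I * Complex.exp (I * t)) =
        I * (I * Complex.exp (I * t))
    rw [map_mul, conj_cexp_real, Complex.conj_I]
    have key : Complex.exp (2 * I * t) * Complex.exp (-I * t) = Complex.exp (I * t) := by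
      rw [← Complex.exp_add]; ring_nf
    linear_combination ((-1 + I) * (-I)) * key
    rfl
  · intro t
    have h := (hasDerivAt_cexp_real (-2 + I) t).const_mul (-1 + I)
    convert h using 1
    show (-1 + 2 * I) * ((-1 + I) * Complex.exp ((-2 + I) * t)) +
        (-1 + I) * Complex.exp (2 * I * t) *
          (starRingEnd ℂ) ((-1 + I) * Complex.exp ((-2 + I) * t)) =
        (-1 + I) * ((-2 + I) * Complex.exp ((-2 + I) * t))
    rw [map_mul, conj_cexp_real]
    have hc1 : (starRingEnd ℂ) (-1 + I) = -1 - I := by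
      rw [map_add, map_neg, map_one, Complex.conj_I]; ring
    have hc2 : (starRingEnd ℂ) (-2 + I) = -2 - I := by
      simp [Complex.ext_iff]
    rw [hc1, hc2]
    have key : Complex.exp (2 * I * t) * Complex.exp ((-2 - I) * t) =
        Complex.exp ((-2 + I) * t) := by
      rw [← Complex.exp_add]; ring_nf
    linear_combination ((-1 : ℂ) + I) * (-1 - I) * key
    rfl
  · intro N _
    have hIexp : Complex.exp (I * ((2 * N * Real.pi : ℝ) : ℂ)) = 1 := by
      have := Complex.exp_int_mul_two_pi_mul_I (N : ℤ)
      rw [← this]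
      push_cast
      ring_nf
    constructor
    · intro t
      show I * Complex.exp (I * ((t + 2 * (N : ℝ) * Real.pi : ℝ) : ℂ)) =
        1 * (I * Complex.exp (I * ((t : ℝ) : ℂ)))
      rw [show ((t + 2 * (N : ℝ) * Real.pi : ℝ) : ℂ) =
          ((t : ℝ) : ℂ) + ((2 * N * Real.pi : ℝ) : ℂ) by push_cast; ring]
      rw [mul_add, Complex.exp_add, hIexp]
      ring
    · intro t
      show (-1 + I) * Complex.exp ((-2 + I) * ((t + 2 * (N : ℝ) * Real.pi : ℝ) : ℂ)) =
        (Real.exp (-2 * (2 * N * Real.pi)) : ℂ) *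
          ((-1 + I) * Complex.exp ((-2 + I) * ((t : ℝ) : ℂ)))
      rw [show ((t + 2 * (N : ℝ) * Real.pi : ℝ) : ℂ) =
          ((t : ℝ) : ℂ) + ((2 * N * Real.pi : ℝ) : ℂ) by push_cast; ring]
      rw [mul_add, Complex.exp_add]
      have : Complex.exp ((-2 + I) * ((2 * N * Real.pi : ℝ) : ℂ)) =
          (Real.exp (-2 * (2 * N * Real.pi)) : ℂ) := by
        rw [show ((-2 : ℂ) + I) * ((2 * N * Real.pi : ℝ) : ℂ) =
            ((-2 * (2 * N * Real.pi) : ℝ) : ℂ) + I * ((2 * N * Real.pi : ℝ) : ℂ) by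
          push_cast; ring]
        rw [Complex.exp_add, hIexp, Complex.ofReal_exp]
        ring
      rw [this]
      ring
end

section
/- For the system ẋ = (1-|x|²)x + i|x|²x + ε(a(t) + b(t)x + c(t)x̄) with x₀(t) = e^{it}, z₀(t) = (1+i)e^{it}, T = 2π, the bifurcation function M(θ) = ∫₀^{2π} ⟨a(t) + b(t)e^{i(t+θ)} + c(t)e^{-i(t+θ)}, z₀(t+θ)⟩ dt equals 2π Re[(â₁e^{-iθ} + b̂₀ + ĉ₂e^{-2iθ})(1-i)], where f̂ₘ = (1/2π)∫₀^{2π} f(t)e^{-imt} dt. -/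
open Complex

/-- For the perturbed system with `x₀(t) = e^{it}`, `z₀(t) = (1+i)e^{it}`, `T = 2π`,
the bifurcation function `M(θ)` equals
`2π Re[(â₁ e^{-iθ} + b̂₀ + ĉ₂ e^{-2iθ})(1-i)]`, where `f̂ₘ` is the `m`-th Fourier
coefficient. -/
theorem bifurcation_function_example
    (a b c : ℝ → ℂ) (ha : Continuous a) (hb : Continuous b) (hc : Continuous c)
    (hap : ∀ t, a (t + 2 * Real.pi) = a t) (hbp : ∀ t, b (t + 2 * Real.pi) = b t)
    (hcp : ∀ t, c (t + 2 * Real.pi) = c t) :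
    let z₀ : ℝ → ℂ := fun t => (1 + I) * Complex.exp (I * t)
    let fourier : (ℝ → ℂ) → ℤ → ℂ := fun f m =>
      (1 / (2 * Real.pi) : ℂ) * ∫ t in (0 : ℝ)..(2 * Real.pi), f t * Complex.exp (-I * m * t)
    ∀ θ : ℝ,
      (∫ t in (0 : ℝ)..(2 * Real.pi),
        ((a t + b t * Complex.exp (I * (t + θ)) + c t * Complex.exp (-I * (t + θ))) *
          (starRingEnd ℂ) (z₀ (t + θ))).re) =
      2 * Real.pi *
        ((fourier a 1 * Complex.exp (-I * θ) + fourier b 0 +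
          fourier c 2 * Complex.exp (-2 * I * θ)) * (1 - I)).re := by
  intro z₀ fourier θ
  set F : ℝ → ℂ := fun t =>
    ((a t + b t * Complex.exp (I * (t + θ)) + c t * Complex.exp (-I * (t + θ))) *
      (starRingEnd ℂ) (z₀ (t + θ))) with hF
  have key : ∀ t : ℝ, F t =
      ((1 - I) * Complex.exp (-I * θ)) * (a t * Complex.exp (-I * ((1:ℤ):ℂ) * t)) +
      (1 - I) * (b t * Complex.exp (-I * ((0:ℤ):ℂ) * t)) +
      ((1 - I) * Complex.exp (-2 * I * θ)) * (c t * Complex.exp (-I * ((2:ℤ):ℂ) * t)) := by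
    intro t
    simp only [hF, z₀]
    push_cast
    have h1 : (starRingEnd ℂ) ((1 + I) * Complex.exp (I * ((t:ℂ) + θ))) =
        (1 - I) * Complex.exp (-(I * ((t:ℂ) + θ))) := by
      rw [map_mul, ← Complex.exp_conj]
      congr 1
      · simp; ring
      · congr 1; simp
    rw [h1]
    have he : ∀ z : ℂ, Complex.exp (-z) = (Complex.exp z)⁻¹ := fun z => Complex.exp_neg z
    rw [show (-I * (((t:ℝ):ℂ) + (θ:ℝ))) = -(I*(((t:ℝ):ℂ)+(θ:ℝ))) by ring,
      show (-I * (1:ℂ) * (t:ℝ)) = -(I*(t:ℝ)) by ring,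
      show (-I * (2:ℂ) * (t:ℝ)) = -(I*(t:ℝ)+I*(t:ℝ)) by ring,
      show (-I * ((θ:ℝ):ℂ)) = -(I*((θ:ℝ):ℂ)) by ring,
      show (-2 * I * ((θ:ℝ):ℂ)) = -(I*(θ:ℝ)+I*(θ:ℝ)) by ring,
      show (-I*(0:ℂ)*(t:ℝ)) = -(0:ℂ) by ring,
      show (I * (((t:ℝ):ℂ) + (θ:ℝ))) = I*(t:ℝ)+I*(θ:ℝ) by ring]
    simp only [he, Complex.exp_add, Complex.exp_zero]
    have h2 := Complex.exp_ne_zero (I*((t:ℝ):ℂ))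
    have h3 := Complex.exp_ne_zero (I*((θ:ℝ):ℂ))
    field_simp
  have hcontF : Continuous F := by
    simp only [hF, z₀]
    exact ((ha.add ((hb.mul (by fun_prop)))).add ((hc.mul (by fun_prop)))).mul (Complex.continuous_conj.comp (by fun_prop))
  have hA : Continuous fun t : ℝ => a t * Complex.exp (-I * ((1:ℤ):ℂ) * t) := by fun_prop
  have hB : Continuous fun t : ℝ => b t * Complex.exp (-I * ((0:ℤ):ℂ) * t) := by fun_prop
  have hC : Continuous fun t : ℝ => c t * Complex.exp (-I * ((2:ℤ):ℂ) * t) := by fun_prop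
  have hre : (∫ t in (0:ℝ)..(2*Real.pi), (F t).re) = (∫ t in (0:ℝ)..(2*Real.pi), F t).re :=
    (Complex.reCLM.intervalIntegral_comp_comm
      (hcontF.intervalIntegrable (μ := MeasureTheory.volume) 0 (2*Real.pi)))
  rw [hre]
  have hsplit : (∫ t in (0:ℝ)..(2*Real.pi), F t) =
      ((1 - I) * Complex.exp (-I * θ)) * (∫ t in (0:ℝ)..(2*Real.pi), a t * Complex.exp (-I * ((1:ℤ):ℂ) * t)) +
      (1 - I) * (∫ t in (0:ℝ)..(2*Real.pi), b t * Complex.exp (-I * ((0:ℤ):ℂ) * t)) +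
      ((1 - I) * Complex.exp (-2 * I * θ)) * (∫ t in (0:ℝ)..(2*Real.pi), c t * Complex.exp (-I * ((2:ℤ):ℂ) * t)) := by
    rw [intervalIntegral.integral_congr (g := fun t =>
      ((1 - I) * Complex.exp (-I * θ)) * (a t * Complex.exp (-I * ((1:ℤ):ℂ) * t)) +
      (1 - I) * (b t * Complex.exp (-I * ((0:ℤ):ℂ) * t)) +
      ((1 - I) * Complex.exp (-2 * I * θ)) * (c t * Complex.exp (-I * ((2:ℤ):ℂ) * t)))
      (fun t _ => key t)]
    rw [intervalIntegral.integral_add, intervalIntegral.integral_add,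
      intervalIntegral.integral_const_mul, intervalIntegral.integral_const_mul,
      intervalIntegral.integral_const_mul]
    · exact ((continuous_const.mul hA).intervalIntegrable _ _)
    · exact ((continuous_const.mul hB).intervalIntegrable _ _)
    · exact (((continuous_const.mul hA).add (continuous_const.mul hB)).intervalIntegrable _ _)
    · exact ((continuous_const.mul hC).intervalIntegrable _ _)
  rw [hsplit]
  simp only [fourier]
  rw [show (2 * Real.pi) * ((((1 / (2 * ↑Real.pi):ℂ) * ∫ t in (0:ℝ)..(2*Real.pi), a t * Complex.exp (-I * ((1:ℤ):ℂ) * t)) * Complex.exp (-I * θ) +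
      ((1 / (2 * ↑Real.pi):ℂ) * ∫ t in (0:ℝ)..(2*Real.pi), b t * Complex.exp (-I * ((0:ℤ):ℂ) * t)) +
      ((1 / (2 * ↑Real.pi):ℂ) * ∫ t in (0:ℝ)..(2*Real.pi), c t * Complex.exp (-I * ((2:ℤ):ℂ) * t)) * Complex.exp (-2 * I * θ)) * (1 - I)).re =
      ((((2 * Real.pi : ℝ):ℂ)) * ((((1 / (2 * ↑Real.pi):ℂ) * ∫ t in (0:ℝ)..(2*Real.pi), a t * Complex.exp (-I * ((1:ℤ):ℂ) * t)) * Complex.exp (-I * θ) +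
      ((1 / (2 * ↑Real.pi):ℂ) * ∫ t in (0:ℝ)..(2*Real.pi), b t * Complex.exp (-I * ((0:ℤ):ℂ) * t)) +
      ((1 / (2 * ↑Real.pi):ℂ) * ∫ t in (0:ℝ)..(2*Real.pi), c t * Complex.exp (-I * ((2:ℤ):ℂ) * t)) * Complex.exp (-2 * I * θ)) * (1 - I))).re by
        rw [Complex.re_ofReal_mul]]
  congr 1
  have hπ : ((Real.pi : ℂ)) ≠ 0 := Complex.ofReal_ne_zero.mpr Real.pi_ne_zero
  push_cast
  field_simp
end

section
/- For 0 ≤ ε < 1, any 2π-periodic solution x(t) of ẋ = (1-|x|²)x + i|x|²x + ε(a(t) + b(t)x + c(t)x̄) satisfies max_t |x(t)| ≤ (1 + ‖a‖_∞ + ‖b‖_∞ + ‖c‖_∞)^{1/2}. -/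
open Complex

private lemma sup_bound_aux (f : ℝ → ℂ) (hf : Continuous f)
    (hp : ∀ s, f (s + 2 * Real.pi) = f s) :
    (∀ s, ‖f s‖ ≤ ⨆ u, ‖f u‖) ∧ 0 ≤ ⨆ u, ‖f u‖ := by
  have hper : Function.Periodic (fun s => ‖f s‖) (2 * Real.pi) := fun s => by simp [hp s]
  have hbdd : BddAbove (Set.range fun s => ‖f s‖) := by
    obtain ⟨M, hM⟩ := ((isCompact_Icc : IsCompact (Set.Icc (0:ℝ) (2 * Real.pi))).image hf.norm).bddAbove
    refine ⟨M, ?_⟩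
    rintro y ⟨s, rfl⟩
    show ‖f s‖ ≤ M
    obtain ⟨u, hu, hval⟩ := hper.exists_mem_Ico₀ (by positivity) s
    rw [hval]
    exact hM ⟨u, Set.Ico_subset_Icc_self hu, rfl⟩
  have h1 : ∀ s, ‖f s‖ ≤ ⨆ u, ‖f u‖ := fun s => le_ciSup hbdd s
  exact ⟨h1, le_trans (norm_nonneg _) (h1 0)⟩

/-- For `0 ≤ ε < 1`, every `2π`-periodic solution of
`ẋ = (1-|x|²)x + i|x|²x + ε(a(t) + b(t)x + c(t)x̄)` satisfies
`max |x(t)| ≤ (1 + ‖a‖_∞ + ‖b‖_∞ + ‖c‖_∞)^{1/2}`. -/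
theorem apriori_bound_periodic_solutions
    (a b c : ℝ → ℂ) (ha : Continuous a) (hb : Continuous b) (hc : Continuous c)
    (hap : ∀ t, a (t + 2 * Real.pi) = a t) (hbp : ∀ t, b (t + 2 * Real.pi) = b t)
    (hcp : ∀ t, c (t + 2 * Real.pi) = c t)
    (ε : ℝ) (hε0 : 0 ≤ ε) (hε1 : ε < 1)
    (x : ℝ → ℂ)
    (hx : ∀ t, HasDerivAt x
      ((1 - (‖x t‖ : ℂ) ^ 2) * x t + I * (‖x t‖ : ℂ) ^ 2 * x t +
        ε * (a t + b t * x t + c t * (starRingEnd ℂ) (x t))) t)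
    (hxper : ∀ t, x (t + 2 * Real.pi) = x t) :
    ∀ t, ‖x t‖ ≤ Real.sqrt (1 + (⨆ s, ‖a s‖) + (⨆ s, ‖b s‖) + (⨆ s, ‖c s‖)) := by
  obtain ⟨hA, hA0⟩ := sup_bound_aux a ha hap
  obtain ⟨hB, hB0⟩ := sup_bound_aux b hb hbp
  obtain ⟨hC, hC0⟩ := sup_bound_aux c hc hcp
  set A := ⨆ s, ‖a s‖
  set B := ⨆ s, ‖b s‖
  set C := ⨆ s, ‖c s‖
  set D : ℝ → ℂ := fun t =>
    (1 - (‖x t‖ : ℂ) ^ 2) * x t + I * (‖x t‖ : ℂ) ^ 2 * x t +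
      ε * (a t + b t * x t + c t * (starRingEnd ℂ) (x t)) with hD
  set r : ℝ → ℝ := fun t => ‖x t‖ ^ 2 with hrdef
  have hr : ∀ t, HasDerivAt r (2 * (D t * (starRingEnd ℂ) (x t)).re) t := by
    intro t
    have hconj : HasDerivAt (fun s => (starRingEnd ℂ) (x s)) ((starRingEnd ℂ) (D t)) t :=
      (hx t).star
    have hprod : HasDerivAt (fun s => x s * (starRingEnd ℂ) (x s))
        (D t * (starRingEnd ℂ) (x t) + x t * (starRingEnd ℂ) (D t)) t := (hx t).mul hconj
    have hre : HasDerivAt (fun s => (x s * (starRingEnd ℂ) (x s)).re)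
        ((D t * (starRingEnd ℂ) (x t) + x t * (starRingEnd ℂ) (D t)).re) t :=
      (Complex.reCLM.hasFDerivAt.comp_hasDerivAt t hprod)
    have heq : (fun s => (x s * (starRingEnd ℂ) (x s)).re) = r := by
      funext s
      rw [Complex.mul_conj]
      simp [hrdef, Complex.normSq_eq_norm_sq, ← Complex.ofReal_pow]
    have hval : (D t * (starRingEnd ℂ) (x t) + x t * (starRingEnd ℂ) (D t)).re
        = 2 * (D t * (starRingEnd ℂ) (x t)).re := by
      have : x t * (starRingEnd ℂ) (D t) = (starRingEnd ℂ) (D t * (starRingEnd ℂ) (x t)) := by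
        simp [mul_comm]
      rw [this, Complex.add_re, Complex.conj_re]
      ring
    rw [heq, hval] at hre
    exact hre
  have hrc : Continuous r := continuous_iff_continuousAt.2 fun t => (hr t).continuousAt
  have hrper : Function.Periodic r (2 * Real.pi) := fun s => by simp [hrdef, hxper s]
  obtain ⟨t₀, ht₀mem, ht₀⟩ := isCompact_Icc.exists_isMaxOn
    (Set.nonempty_Icc.2 (by positivity : (0:ℝ) ≤ 2 * Real.pi)) hrc.continuousOn
  have hmax : ∀ s, r s ≤ r t₀ := by
    intro s
    obtain ⟨u, hu, hval⟩ := hrper.exists_mem_Ico₀ (by positivity) s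
    rw [hval]
    exact ht₀ (Set.Ico_subset_Icc_self hu)
  have hlocal : IsLocalMax r t₀ := Filter.Eventually.of_forall hmax
  have hzero : 2 * (D t₀ * (starRingEnd ℂ) (x t₀)).re = 0 :=
    hlocal.hasDerivAt_eq_zero (hr t₀)
  set z := x t₀ with hz
  set n : ℝ := ‖z‖ with hn
  have hn0 : 0 ≤ n := norm_nonneg _
  have hzz : z * (starRingEnd ℂ) z = ((n ^ 2 : ℝ) : ℂ) := by
    rw [Complex.mul_conj]
    simp [hn, Complex.normSq_eq_norm_sq]
  set E : ℝ := ((a t₀ + b t₀ * z + c t₀ * (starRingEnd ℂ) z) * (starRingEnd ℂ) z).re with hE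
  have hre : (D t₀ * (starRingEnd ℂ) z).re = (1 - n ^ 2) * n ^ 2 + ε * E := by
    have h1 : D t₀ * (starRingEnd ℂ) z
        = (1 - (n : ℂ) ^ 2) * (z * (starRingEnd ℂ) z) + I * (n : ℂ) ^ 2 * (z * (starRingEnd ℂ) z)
          + (ε : ℂ) * ((a t₀ + b t₀ * z + c t₀ * (starRingEnd ℂ) z) * (starRingEnd ℂ) z) := by
      rw [hD]; ring
    rw [h1, hzz, hE]
    simp [Complex.add_re, Complex.mul_re, Complex.sub_re, Complex.sub_im,
      Complex.ofReal_re, Complex.ofReal_im, Complex.I_re, Complex.I_im, Complex.one_re,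
      Complex.one_im, Complex.re_ofReal_mul, ← Complex.ofReal_pow]
  have hEbound : E ≤ (A + B * n + C * n) * n := by
    have h2 : E ≤ ‖(a t₀ + b t₀ * z + c t₀ * (starRingEnd ℂ) z) * (starRingEnd ℂ) z‖ := by
      rw [hE]
      exact Complex.re_le_norm _
    refine h2.trans ?_
    rw [norm_mul]
    have h3 : ‖a t₀ + b t₀ * z + c t₀ * (starRingEnd ℂ) z‖ ≤ A + B * n + C * n := by
      refine (norm_add_le _ _).trans ?_
      refine add_le_add ((norm_add_le _ _).trans (add_le_add (hA t₀) ?_)) ?_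
      · rw [norm_mul]; exact mul_le_mul_of_nonneg_right (hB t₀) hn0
      · rw [norm_mul, RCLike.norm_conj]; exact mul_le_mul_of_nonneg_right (hC t₀) hn0
    have h4 : ‖(starRingEnd ℂ) z‖ = n := by rw [RCLike.norm_conj]
    rw [h4]
    exact mul_le_mul_of_nonneg_right h3 hn0
  have hkey : (n ^ 2 - 1) * n ^ 2 ≤ ε * ((A + B * n + C * n) * n) := by
    have h0 : (1 - n ^ 2) * n ^ 2 + ε * E = 0 := by
      have := hzero; rw [hre] at this; linarith
    nlinarith [mul_le_mul_of_nonneg_left hEbound hε0]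
  have hn2 : n ^ 2 ≤ 1 + A + B + C := by
    rcases le_or_gt n 1 with h1 | h1
    · nlinarith
    · have hX : 0 ≤ (A + B * n + C * n) * n := by positivity
      have h2 : ε * ((A + B * n + C * n) * n) ≤ (A + B * n + C * n) * n := by nlinarith
      have h3 : (n ^ 2 - 1) * n ^ 2 ≤ (A + B + C) * n ^ 2 := by
        nlinarith [mul_le_mul_of_nonneg_left (show n ≤ n ^ 2 by nlinarith) hA0]
      nlinarith [sq_nonneg n, mul_pos (lt_trans one_pos h1) (lt_trans one_pos h1)]
  intro t
  have h5 : ‖x t‖ ^ 2 ≤ 1 + A + B + C := le_trans (hmax t) hn2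
  have h6 : ‖x t‖ = Real.sqrt (‖x t‖ ^ 2) := (Real.sqrt_sq (norm_nonneg _)).symm
  rw [h6]
  exact Real.sqrt_le_sqrt h5
end

section
/- Let Y(t) be the principal fundamental matrix of the T-periodic linear system ẏ = A(t)y and suppose its T-periodic adjoint solutions are spanned by z₀(t). Then the range of the linear map Y(θ+T)Y(θ)⁻¹ - I equals the orthogonal complement of z₀(θ) in ℝⁿ, for each θ ∈ ℝ. -/
open Matrix

section Aux

variable {n : ℕ}

private lemma hasDerivAt_dot {f g : ℝ → Fin n → ℝ} {f' g' : Fin n → ℝ} {t : ℝ}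
    (hf : HasDerivAt f f' t) (hg : HasDerivAt g g' t) :
    HasDerivAt (fun s => f s ⬝ᵥ g s) (f' ⬝ᵥ g t + f t ⬝ᵥ g') t := by
  have h := HasDerivAt.fun_sum (u := Finset.univ)
    (A := fun i s => f s i * g s i)
    (A' := fun i => f' i * g t i + f t i * g' i)
    (fun i _ => ((hasDerivAt_pi.1 hf i).mul (hasDerivAt_pi.1 hg i)))
  simpa [dotProduct, Finset.sum_add_distrib] using h

private lemma hasDerivAt_mulVec_aux {F : ℝ → Matrix (Fin n) (Fin n) ℝ}
    {F' : Matrix (Fin n) (Fin n) ℝ} {g : ℝ → Fin n → ℝ} {g' : Fin n → ℝ} {t : ℝ}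
    (hF : ∀ i j, HasDerivAt (fun s => F s i j) (F' i j) t)
    (hg : HasDerivAt g g' t) :
    HasDerivAt (fun s => F s *ᵥ g s) (F' *ᵥ g t + F t *ᵥ g') t := by
  rw [hasDerivAt_pi]
  intro i
  have hFi : HasDerivAt (fun s => F s i) (F' i) t := hasDerivAt_pi.2 (hF i)
  simpa [Matrix.mulVec, Pi.add_apply] using hasDerivAt_dot hFi hg

private lemma differentiable_det {M : ℝ → Matrix (Fin n) (Fin n) ℝ}
    (h : ∀ i j, Differentiable ℝ fun s => M s i j) :
    Differentiable ℝ fun s => (M s).det := by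
  simp only [Matrix.det_apply']
  apply Differentiable.fun_sum
  intro σ _
  exact Differentiable.const_mul
    (Differentiable.fun_finset_prod (fun i _ => h (σ i) i)) _

private lemma linear_ODE_unique {A : ℝ → Matrix (Fin n) (Fin n) ℝ}
    (hA : Continuous A) {f g : ℝ → Fin n → ℝ}
    (hf : ∀ t, HasDerivAt f ((A t).mulVec (f t)) t)
    (hg : ∀ t, HasDerivAt g ((A t).mulVec (g t)) t)
    {t₀ : ℝ} (h0 : f t₀ = g t₀) : f = g := by
  funext t₁
  set a : ℝ := min t₀ t₁ - 1 with ha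
  set b : ℝ := max t₀ t₁ + 1 with hb
  have hab : a ≤ b := by
    have := min_le_max (a := t₀) (b := t₁)
    simp only [ha, hb]; linarith
  let Φ : Matrix (Fin n) (Fin n) ℝ →ₗ[ℝ] (Fin n → ℝ) →L[ℝ] (Fin n → ℝ) :=
    (LinearMap.toContinuousLinearMap : ((Fin n → ℝ) →ₗ[ℝ] (Fin n → ℝ)) ≃ₗ[ℝ] _).toLinearMap
      ∘ₗ (Matrix.toLin' : Matrix (Fin n) (Fin n) ℝ ≃ₗ[ℝ] _).toLinearMap
  have hΦa : ∀ (M : Matrix (Fin n) (Fin n) ℝ) (x : Fin n → ℝ), Φ M x = M *ᵥ x := by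
    intro M x
    simp [Φ, Matrix.toLin'_apply]
  have hΦ : Continuous Φ := Φ.continuous_of_finiteDimensional
  obtain ⟨C, hC⟩ : ∃ C, ∀ t ∈ Set.Icc a b, ‖Φ (A t)‖ ≤ C :=
    isCompact_Icc.exists_bound_of_continuousOn ((hΦ.comp hA).continuousOn)
  set K : NNReal := Real.toNNReal C with hK
  set v : ℝ → (Fin n → ℝ) → (Fin n → ℝ) :=
    fun t x => (A (Set.projIcc a b hab t)).mulVec x with hv_def
  have hv : ∀ t, LipschitzOnWith K (v t) Set.univ := by
    intro t
    apply LipschitzWith.lipschitzOnWith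
    set u : ℝ := (Set.projIcc a b hab t : ℝ)
    have h1 : LipschitzWith ‖Φ (A u)‖₊ (v t) := by
      have h2 := (Φ (A u)).lipschitz
      have h3 : ⇑(Φ (A u)) = v t := funext fun x => hΦa (A u) x
      rwa [h3] at h2
    refine h1.weaken ?_
    have h2 : ‖Φ (A u)‖ ≤ C := hC _ (Set.projIcc a b hab t).2
    have h3 : ‖Φ (A u)‖₊ = Real.toNNReal ‖Φ (A u)‖ := (Real.toNNReal_coe).symm
    rw [h3, hK]
    exact Real.toNNReal_mono h2
  have ht₀ : t₀ ∈ Set.Ioo a b := by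
    constructor
    · have := min_le_left t₀ t₁; simp only [ha]; linarith
    · have := le_max_left t₀ t₁; simp only [hb]; linarith
  have hderiv : ∀ (F : ℝ → Fin n → ℝ), (∀ t, HasDerivAt F ((A t).mulVec (F t)) t) →
      ∀ t ∈ Set.Ioo a b, HasDerivAt F (v t (F t)) t := by
    intro F hF t ht
    have hmem : t ∈ Set.Icc a b := Set.mem_Icc_of_Ioo ht
    have hproj : (Set.projIcc a b hab t : ℝ) = t := by
      rw [Set.projIcc_of_mem hab hmem]
    simp only [hv_def, hproj]
    exact hF t
  have key := ODE_solution_unique_of_mem_Icc (v := v) (s := fun _ => Set.univ)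
    (K := K) (fun t _ => hv t) ht₀
    (fun t _ => (hf t).continuousAt.continuousWithinAt)
    (hderiv f hf)
    (fun t _ => Set.mem_univ _)
    (fun t _ => (hg t).continuousAt.continuousWithinAt)
    (hderiv g hg)
    (fun t _ => Set.mem_univ _)
    h0
  apply key
  constructor
  · have := min_le_right t₀ t₁; simp only [ha]; linarith
  · have := le_max_right t₀ t₁; simp only [hb]; linarith

end Aux

/-- If the `T`-periodic adjoint solutions are spanned by `z₀`, then the range of
`Y(θ+T)Y(θ)⁻¹ - I` is the orthogonal complement of `z₀(θ)`. -/
theorem range_monodromy_minus_id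
    {n : ℕ} (T : ℝ) (hT : 0 < T)
    (A : ℝ → Matrix (Fin n) (Fin n) ℝ)
    (hAcont : Continuous fun p : ℝ × (Fin n → ℝ) => (A p.1).mulVec p.2)
    (hAper : ∀ t, A (t + T) = A t)
    (Y : ℝ → Matrix (Fin n) (Fin n) ℝ)
    (hY : ∀ (v : Fin n → ℝ) (t : ℝ),
      HasDerivAt (fun s => (Y s).mulVec v) ((A t).mulVec ((Y t).mulVec v)) t)
    (hY0 : Y 0 = 1)
    (z₀ : ℝ → Fin n → ℝ)
    (hz₀ : ∀ t, HasDerivAt z₀ (-(A t)ᵀ.mulVec (z₀ t)) t)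
    (hz₀per : ∀ t, z₀ (t + T) = z₀ t) (hz₀ne : z₀ ≠ 0)
    (hspan : ∀ z : ℝ → Fin n → ℝ,
      (∀ t, HasDerivAt z (-(A t)ᵀ.mulVec (z t)) t) → (∀ t, z (t + T) = z t) →
        ∃ c : ℝ, z = c • z₀) :
    ∀ θ : ℝ,
      {x : Fin n → ℝ | ∃ w, (Y (θ + T) * (Y θ)⁻¹ - 1).mulVec w = x} =
        {η : Fin n → ℝ | η ⬝ᵥ z₀ θ = 0} := by
  classical
  -- continuity of A
  have hA : Continuous A := by
    apply continuous_matrix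
    intro i j
    have h1 : Continuous fun t : ℝ => (A t *ᵥ Pi.single j 1) i :=
      (continuous_apply i).comp (hAcont.comp (continuous_id.prodMk continuous_const))
    simpa using h1
  -- entrywise derivative of Y
  have hYe : ∀ (i j : Fin n) (t : ℝ),
      HasDerivAt (fun s => Y s i j) ((A t * Y t) i j) t := by
    intro i j t
    have h1 := hasDerivAt_pi.1 (hY (Pi.single j 1) t) i
    simpa [Matrix.mulVec_mulVec, Matrix.mul_apply, Matrix.mulVec, dotProduct, Pi.single_apply] using h1
  -- invertibility of Y t
  have hYu : ∀ t, IsUnit (Y t) := by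
    intro t
    rw [← Matrix.mulVec_injective_iff_isUnit]
    intro v w hvw
    have h1 := linear_ODE_unique hA (hY v) (hY w) (t₀ := t) hvw
    have h0 := congrFun h1 0
    simpa [hY0] using h0
  have hdet : ∀ t, IsUnit (Y t).det := fun t => (Matrix.isUnit_iff_isUnit_det _).1 (hYu t)
  have hdetT : ∀ t, IsUnit ((Y t)ᵀ).det := fun t => by
    rw [Matrix.det_transpose]; exact hdet t
  -- conserved quantity
  have hcons : ∀ (v : Fin n → ℝ) (t : ℝ), z₀ t ⬝ᵥ ((Y t).mulVec v) = z₀ 0 ⬝ᵥ v := by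
    intro v
    have hd : ∀ t, HasDerivAt (fun s => z₀ s ⬝ᵥ (Y s *ᵥ v)) 0 t := by
      intro t
      have h := hasDerivAt_dot (hz₀ t) (hY v t)
      have h2 : (-((A t)ᵀ *ᵥ z₀ t)) ⬝ᵥ (Y t *ᵥ v) + z₀ t ⬝ᵥ (A t *ᵥ (Y t *ᵥ v)) = 0 := by
        rw [neg_dotProduct, Matrix.dotProduct_mulVec, Matrix.mulVec_transpose,
          Matrix.dotProduct_mulVec, Matrix.dotProduct_mulVec]
        exact neg_add_cancel _
      rwa [h2] at h
    intro t
    have hconstfn := is_const_of_deriv_eq_zero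
      (fun s => (hd s).differentiableAt) (fun s => (hd s).deriv) t 0
    simpa [hY0] using hconstfn
  have hYtz : ∀ t, (Y t)ᵀ *ᵥ z₀ t = z₀ 0 := by
    intro t; funext i
    have h := hcons (Pi.single i 1) t
    simp only [Matrix.mulVec_single, dotProduct_single, mul_one] at h
    simp only [Matrix.mulVec, dotProduct, Matrix.transpose_apply]
    rw [← h]
    simp [dotProduct, mul_comm]
  -- z₀ never vanishes
  have hz₀t : ∀ t, z₀ t ≠ 0 := by
    intro τ hτ
    apply hz₀ne
    have h0 : z₀ 0 = 0 := by rw [← hYtz τ, hτ, Matrix.mulVec_zero]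
    funext t
    have hinj : Function.Injective ((Y t)ᵀ).mulVec :=
      Matrix.mulVec_injective_iff_isUnit.2 ((Matrix.isUnit_transpose _).2 (hYu t))
    have : (Y t)ᵀ *ᵥ z₀ t = (Y t)ᵀ *ᵥ 0 := by
      rw [Matrix.mulVec_zero, hYtz t, h0]
    exact hinj this
  -- flow property
  have hYT : ∀ s, Y (s + T) = Y s * Y T := by
    have main : ∀ v : Fin n → ℝ, (fun s => Y (s + T) *ᵥ v) = fun s => (Y s * Y T) *ᵥ v := by
      intro v
      apply linear_ODE_unique hA (t₀ := 0) ?_ ?_ ?_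
      · intro t
        have h1 := hY v (t + T)
        have h2 := h1.scomp t ((hasDerivAt_id t).add_const T)
        simp only [Function.comp, one_smul] at h2
        rw [hAper] at h2
        exact h2
      · intro t
        have h3 := hY (Y T *ᵥ v) t
        simpa [Matrix.mulVec_mulVec] using h3
      · simp [hY0, Matrix.mulVec_mulVec]
    intro s
    ext i j
    have h4 := congrFun (congrFun (main (Pi.single j 1)) s) i
    simpa [Matrix.mulVec_single] using h4
  -- differentiability of inverse transpose
  have hYdiff : ∀ i j, Differentiable ℝ fun s => Y s i j := fun i j t =>
    (hYe i j t).differentiableAt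
  have hdetdiff : Differentiable ℝ fun s => (Y s).det := differentiable_det hYdiff
  have hWdiff : ∀ i j, Differentiable ℝ fun s => ((Y s)ᵀ)⁻¹ i j := by
    intro i j
    have hrw : (fun s => ((Y s)ᵀ)⁻¹ i j)
        = fun s => ((Y s).det)⁻¹ * (((Y s)ᵀ).updateRow j (Pi.single i 1)).det := by
      funext s
      rw [Matrix.inv_def, Matrix.smul_apply, Matrix.det_transpose, Ring.inverse_eq_inv,
        smul_eq_mul, Matrix.adjugate_apply]
    rw [hrw]
    apply Differentiable.mul
    · exact hdetdiff.inv fun s => (hdet s).ne_zero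
    · apply differentiable_det
      intro a b
      rcases eq_or_ne a j with rfl | hne
      · simp only [Matrix.updateRow_apply, if_pos rfl]
        exact differentiable_const _
      · simp only [Matrix.updateRow_apply, if_neg hne, Matrix.transpose_apply]
        exact hYdiff b a
  -- adjoint solutions
  have hWY : ∀ t, ((Y t)ᵀ)⁻¹ * (Y t)ᵀ = 1 := fun t => Matrix.nonsing_inv_mul _ (hdetT t)
  have hYW : ∀ t, (Y t)ᵀ * ((Y t)ᵀ)⁻¹ = 1 := fun t => Matrix.mul_nonsing_inv _ (hdetT t)
  have hadj : ∀ w : Fin n → ℝ, ∀ t,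
      HasDerivAt (fun s => ((Y s)ᵀ)⁻¹ *ᵥ w) (-((A t)ᵀ *ᵥ (((Y t)ᵀ)⁻¹ *ᵥ w))) t := by
    intro w
    set z : ℝ → Fin n → ℝ := fun s => ((Y s)ᵀ)⁻¹ *ᵥ w with hzdef
    have hzdiff : Differentiable ℝ z := by
      rw [differentiable_pi]
      intro i
      have : (fun s => z s i) = fun s => ∑ j, ((Y s)ᵀ)⁻¹ i j * w j := by
        funext s; rfl
      rw [this]
      apply Differentiable.fun_sum
      intro j _
      exact (hWdiff i j).mul_const _
    intro t
    have hzd : HasDerivAt z (deriv z t) t := (hzdiff t).hasDerivAt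
    have hconst : ∀ s, (Y s)ᵀ *ᵥ z s = w := by
      intro s
      rw [hzdef]
      simp only
      rw [Matrix.mulVec_mulVec, hYW s, Matrix.one_mulVec]
    have hF : HasDerivAt (fun s => (Y s)ᵀ *ᵥ z s)
        ((A t * Y t)ᵀ *ᵥ z t + (Y t)ᵀ *ᵥ deriv z t) t := by
      apply hasDerivAt_mulVec_aux (fun i j => ?_) hzd
      simpa [Matrix.transpose_apply] using hYe j i t
    have hF0 : HasDerivAt (fun s => (Y s)ᵀ *ᵥ z s) 0 t := by
      have hrw : (fun s => (Y s)ᵀ *ᵥ z s) = fun _ => w := funext hconst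
      rw [hrw]
      exact hasDerivAt_const t w
    have heq := hF.unique hF0
    have h2 : (Y t)ᵀ *ᵥ deriv z t = -((A t * Y t)ᵀ *ᵥ z t) := by
      have := heq
      linear_combination (norm := module) this
    have h3 : deriv z t = -((A t)ᵀ *ᵥ z t) := by
      have h4 := congrArg (fun x => ((Y t)ᵀ)⁻¹ *ᵥ x) h2
      rw [Matrix.mulVec_mulVec, hWY t, Matrix.one_mulVec] at h4
      rw [h4, Matrix.transpose_mul, Matrix.mulVec_neg, Matrix.mulVec_mulVec,
        ← Matrix.mul_assoc, hWY t, Matrix.one_mul]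
    rw [← h3]
    exact hzd
  -- main part
  intro θ
  set Bm : Matrix (Fin n) (Fin n) ℝ := Y (θ + T) * (Y θ)⁻¹ - 1 with hBm
  have hstepA : ∀ w, (Bm *ᵥ w) ⬝ᵥ z₀ θ = 0 := by
    intro w
    have h1 : Bm *ᵥ w = Y (θ + T) *ᵥ ((Y θ)⁻¹ *ᵥ w) - w := by
      rw [hBm, Matrix.sub_mulVec, Matrix.one_mulVec, Matrix.mulVec_mulVec]
    rw [h1, sub_dotProduct]
    have h2 : (Y (θ + T) *ᵥ ((Y θ)⁻¹ *ᵥ w)) ⬝ᵥ z₀ θ = z₀ 0 ⬝ᵥ ((Y θ)⁻¹ *ᵥ w) := by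
      rw [dotProduct_comm]
      have h := hcons ((Y θ)⁻¹ *ᵥ w) (θ + T)
      rwa [hz₀per θ] at h
    have h3 : w ⬝ᵥ z₀ θ = z₀ 0 ⬝ᵥ ((Y θ)⁻¹ *ᵥ w) := by
      have h4 := hcons ((Y θ)⁻¹ *ᵥ w) θ
      rw [Matrix.mulVec_mulVec, Matrix.mul_nonsing_inv _ (hdet θ), Matrix.one_mulVec] at h4
      rw [dotProduct_comm]
      exact h4.symm ▸ rfl
    rw [h2, ← h3, sub_self]
  have hBT : Bmᵀ *ᵥ z₀ θ = 0 := by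
    rw [hBm, Matrix.transpose_sub, Matrix.transpose_one, Matrix.sub_mulVec, Matrix.one_mulVec,
      Matrix.transpose_mul, ← Matrix.mulVec_mulVec]
    have h5 : (Y (θ + T))ᵀ *ᵥ z₀ θ = z₀ 0 := by
      have := hYtz (θ + T)
      rwa [hz₀per θ] at this
    rw [h5, ← hYtz θ, Matrix.mulVec_mulVec, Matrix.transpose_nonsing_inv,
      Matrix.nonsing_inv_mul _ (hdetT θ), Matrix.one_mulVec, sub_self]
  have hker : ∀ ζ, Bmᵀ *ᵥ ζ = 0 → ∃ c : ℝ, ζ = c • z₀ θ := by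
    intro ζ hζ
    have h6 : ((Y θ)ᵀ)⁻¹ *ᵥ ((Y (θ + T))ᵀ *ᵥ ζ) = ζ := by
      rw [hBm, Matrix.transpose_sub, Matrix.transpose_one, Matrix.sub_mulVec,
        Matrix.one_mulVec, Matrix.transpose_mul, ← Matrix.mulVec_mulVec,
        Matrix.transpose_nonsing_inv, sub_eq_zero] at hζ
      exact hζ
    have hfix : (Y (θ + T))ᵀ *ᵥ ζ = (Y θ)ᵀ *ᵥ ζ := by
      have h7 := congrArg (fun x => (Y θ)ᵀ *ᵥ x) h6
      rwa [Matrix.mulVec_mulVec, hYW θ, Matrix.one_mulVec] at h7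
    set w : Fin n → ℝ := (Y θ)ᵀ *ᵥ ζ with hw
    have hwfix : (Y T)ᵀ *ᵥ w = w := by
      rw [hYT θ, Matrix.transpose_mul, ← Matrix.mulVec_mulVec] at hfix
      exact hfix
    set z : ℝ → Fin n → ℝ := fun t => ((Y t)ᵀ)⁻¹ *ᵥ w with hzdef
    have hzper : ∀ t, z (t + T) = z t := by
      intro t
      have hTw : ((Y T)ᵀ)⁻¹ *ᵥ w = w := by
        have h8 := congrArg (fun x => ((Y T)ᵀ)⁻¹ *ᵥ x) hwfix
        rw [Matrix.mulVec_mulVec, hWY T, Matrix.one_mulVec] at h8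
        exact h8.symm
      rw [hzdef]
      simp only
      rw [hYT t, Matrix.transpose_mul, Matrix.mul_inv_rev, ← Matrix.mulVec_mulVec, hTw]
    obtain ⟨c, hc⟩ := hspan z (hadj w) hzper
    refine ⟨c, ?_⟩
    have hzθ : z θ = ζ := by
      rw [hzdef]
      simp only
      rw [hw, Matrix.mulVec_mulVec, hWY θ, Matrix.one_mulVec]
    rw [← hzθ, hc]
    rfl
  -- linear algebra
  let φ : (Fin n → ℝ) →ₗ[ℝ] ℝ :=
    { toFun := fun η => η ⬝ᵥ z₀ θ
      map_add' := fun x y => add_dotProduct x y _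
      map_smul' := fun c x => smul_dotProduct c x _ }
  have hφsurj : Function.Surjective φ := by
    intro r
    have hne : z₀ θ ⬝ᵥ z₀ θ ≠ 0 := by
      rw [Ne, dotProduct_self_eq_zero]
      exact hz₀t θ
    refine ⟨(r / (z₀ θ ⬝ᵥ z₀ θ)) • z₀ θ, ?_⟩
    show ((r / (z₀ θ ⬝ᵥ z₀ θ)) • z₀ θ) ⬝ᵥ z₀ θ = r
    rw [smul_dotProduct, smul_eq_mul, div_mul_cancel₀ r hne]
  have hkerφ : 1 + Module.finrank ℝ (LinearMap.ker φ) = n := by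
    have h := LinearMap.finrank_range_add_finrank_ker φ
    rw [LinearMap.range_eq_top.2 hφsurj, finrank_top] at h
    simpa using h
  have hkerT : LinearMap.ker (Bmᵀ).mulVecLin = Submodule.span ℝ {z₀ θ} := by
    apply le_antisymm
    · intro ζ hζ
      rw [LinearMap.mem_ker, Matrix.mulVecLin_apply] at hζ
      obtain ⟨c, hc⟩ := hker ζ hζ
      rw [Submodule.mem_span_singleton]
      exact ⟨c, hc.symm⟩
    · rw [Submodule.span_le, Set.singleton_subset_iff]
      exact LinearMap.mem_ker.2 (by rw [Matrix.mulVecLin_apply]; exact hBT)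
  have hrankT : Bmᵀ.rank + 1 = n := by
    have h := LinearMap.finrank_range_add_finrank_ker (Bmᵀ).mulVecLin
    rw [hkerT, finrank_span_singleton (hz₀t θ)] at h
    simpa [Matrix.rank] using h
  have hle : LinearMap.range Bm.mulVecLin ≤ LinearMap.ker φ := by
    rintro x ⟨w, rfl⟩
    exact hstepA w
  have hfr : Module.finrank ℝ (LinearMap.range Bm.mulVecLin)
      = Module.finrank ℝ (LinearMap.ker φ) := by
    have h1 : Module.finrank ℝ (LinearMap.range Bm.mulVecLin) = Bm.rank := rfl
    rw [h1, ← Matrix.rank_transpose]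
    omega
  have hmain := Submodule.eq_of_le_of_finrank_eq hle hfr
  ext x
  simp only [Set.mem_setOf_eq]
  constructor
  · rintro ⟨w, rfl⟩
    exact hstepA w
  · intro hx
    have hmem : x ∈ LinearMap.range Bm.mulVecLin := by
      rw [hmain]
      exact LinearMap.mem_ker.2 hx
    obtain ⟨w, hw⟩ := hmem
    exact ⟨w, by simpa [Matrix.mulVecLin_apply] using hw⟩
end

section
/- Let A be a continuous T-periodic n×n matrix function, z₀ a T-periodic solution of the adjoint system ż = -A(t)ᵀz, and b : ℝ → ℝⁿ continuous and T-periodic. If the inhomogeneous equation ẏ = A(t)y + b(t) has a T-periodic solution, then ∫₀^T ⟨b(t), z₀(t)⟩ dt = 0. -/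
open Matrix intervalIntegral

/-- Fredholm alternative (necessity): if `ẏ = A(t)y + b(t)` has a `T`-periodic
solution and `z₀` is a `T`-periodic adjoint solution, then `∫₀ᵀ ⟨b(t), z₀(t)⟩ dt = 0`. -/
theorem fredholm_alternative_necessity
    {n : ℕ} (T : ℝ) (hT : 0 < T)
    (A : ℝ → Matrix (Fin n) (Fin n) ℝ)
    (hAcont : Continuous fun p : ℝ × (Fin n → ℝ) => (A p.1).mulVec p.2)
    (hAper : ∀ t, A (t + T) = A t)
    (b : ℝ → Fin n → ℝ) (hb : Continuous b) (hbper : ∀ t, b (t + T) = b t)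
    (z₀ : ℝ → Fin n → ℝ)
    (hz₀ : ∀ t, HasDerivAt z₀ (-(A t)ᵀ.mulVec (z₀ t)) t)
    (hz₀per : ∀ t, z₀ (t + T) = z₀ t)
    (hexists : ∃ y : ℝ → Fin n → ℝ,
      (∀ t, HasDerivAt y ((A t).mulVec (y t) + b t) t) ∧ (∀ t, y (t + T) = y t)) :
    (∫ t in (0:ℝ)..T, b t ⬝ᵥ z₀ t) = 0 := by
  obtain ⟨y, hy, hyper⟩ := hexists
  -- derivative of t ↦ y t ⬝ᵥ z₀ t is b t ⬝ᵥ z₀ t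
  have key : ∀ t, HasDerivAt (fun t => y t ⬝ᵥ z₀ t) (b t ⬝ᵥ z₀ t) t := by
    intro t
    have h1 : HasDerivAt (fun t => y t ⬝ᵥ z₀ t)
        (((A t).mulVec (y t) + b t) ⬝ᵥ z₀ t + y t ⬝ᵥ (-(A t)ᵀ.mulVec (z₀ t))) t := by
      simp only [dotProduct, Finset.sum_apply]
      have : ∀ i : Fin n, HasDerivAt (fun t => y t i * z₀ t i)
          (((A t).mulVec (y t) + b t) i * z₀ t i + y t i * (-(A t)ᵀ.mulVec (z₀ t)) i) t := by
        intro i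
        exact ((hasDerivAt_pi.mp (hy t)) i).mul ((hasDerivAt_pi.mp (hz₀ t)) i)
      have := HasDerivAt.fun_sum (u := Finset.univ) (fun i _ => this i)
      simpa [Finset.sum_add_distrib] using this
    have heq : ((A t).mulVec (y t) + b t) ⬝ᵥ z₀ t + y t ⬝ᵥ (-(A t)ᵀ.mulVec (z₀ t))
        = b t ⬝ᵥ z₀ t := by
      rw [add_dotProduct, dotProduct_neg, dotProduct_mulVec, vecMul_transpose]
      ring
    rwa [heq] at h1
  have hzc : Continuous z₀ := by
    have : Differentiable ℝ z₀ := fun t => (hz₀ t).differentiableAt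
    exact this.continuous
  have hc : Continuous fun t => b t ⬝ᵥ z₀ t := by
    simp only [dotProduct]
    exact continuous_finset_sum _ fun i _ =>
      ((continuous_apply i).comp hb).mul ((continuous_apply i).comp hzc)
  have hint : IntervalIntegrable (fun t => b t ⬝ᵥ z₀ t) MeasureTheory.volume 0 T :=
    hc.intervalIntegrable 0 T
  have := intervalIntegral.integral_eq_sub_of_hasDerivAt
    (fun t _ => key t) hint
  rw [this]
  have : y T ⬝ᵥ z₀ T = y 0 ⬝ᵥ z₀ 0 := by
    have h1 := hyper 0; have h2 := hz₀per 0
    simp only [zero_add] at h1 h2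
    rw [h1, h2]
  rw [this, sub_self]
end

section
/- Consider ẏ = A(t)y with A continuous and T-periodic, monodromy eigenvalues μ₁ = 1 (simple, eigenvector ẋ₀(0)) and |μⱼ| < 1 for j ≥ 2. Pick solutions y₁,…,y_{n-1} of the system whose values at time θ₀ are orthogonal to z₀(θ₀), where z₀ is the normalized T-periodic adjoint solution. Then the n×(n-1) matrix Y₁(θ) = (y₁(θ)|…|y_{n-1}(θ)) satisfies Y₁(θ + T) = Y₁(θ)A_θ for some (n-1)×(n-1) matrix A_θ whose eigenvalues are μ₂, …, μₙ. -/
open Matrix Polynomial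

section Aux
open Set

lemma linODE_unique {n : ℕ} (A : ℝ → Matrix (Fin n) (Fin n) ℝ)
    (hAcont : Continuous fun p : ℝ × (Fin n → ℝ) => (A p.1).mulVec p.2)
    (f g : ℝ → Fin n → ℝ)
    (hf : ∀ t, HasDerivAt f ((A t).mulVec (f t)) t)
    (hg : ∀ t, HasDerivAt g ((A t).mulVec (g t)) t)
    (t₀ : ℝ) (h0 : f t₀ = g t₀) (t : ℝ) : f t = g t := by
  have hA : Continuous A := by
    apply continuous_matrix
    intro i j
    have h1 : Continuous fun s : ℝ => (A s).mulVec (Pi.single j 1) :=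
      hAcont.comp (continuous_id.prodMk continuous_const)
    have h2 := (continuous_apply i).comp h1
    simpa [Matrix.mulVec_single, Function.comp_def, Matrix.col_apply] using h2
  let Φ : Matrix (Fin n) (Fin n) ℝ →ₗ[ℝ] ((Fin n → ℝ) →L[ℝ] (Fin n → ℝ)) :=
    (LinearMap.toContinuousLinearMap.toLinearMap).comp (Matrix.toLin'.toLinearMap)
  have hΦc : Continuous Φ := Φ.continuous_of_finiteDimensional
  have hΦapp : ∀ M v, Φ M v = M.mulVec v := by
    intro M v
    simp [Φ, Matrix.toLin'_apply]
  set a : ℝ := min t t₀ - 1 with ha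
  set b : ℝ := max t t₀ + 1 with hb
  have hab : a < b := by
    have := min_le_max (a := t) (b := t₀); dsimp [a, b]; linarith
  have ht : t ∈ Ioo a b := by
    constructor
    · have := min_le_left t t₀; dsimp [a]; linarith
    · have := le_max_left t t₀; dsimp [b]; linarith
  have ht₀ : t₀ ∈ Ioo a b := by
    constructor
    · have := min_le_right t t₀; dsimp [a]; linarith
    · have := le_max_right t t₀; dsimp [b]; linarith
  let c : ℝ → ℝ := fun s => max a (min s b)
  have hc : ∀ s ∈ Icc a b, c s = s := fun s hs => by
    simp only [c]; rw [min_eq_left hs.2, max_eq_right hs.1]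
  have hcmem : ∀ s, c s ∈ Icc a b := fun s =>
    ⟨le_max_left _ _, max_le hab.le (min_le_right _ _)⟩
  obtain ⟨C, hC⟩ := (isCompact_Icc (a := a) (b := b)).exists_bound_of_continuousOn
    (Continuous.continuousOn (hΦc.comp hA) (s := Icc a b))
  have hC0 : 0 ≤ C := le_trans (norm_nonneg _) (hC a ⟨le_refl a, hab.le⟩)
  set v : ℝ → (Fin n → ℝ) → (Fin n → ℝ) := fun s y => (A (c s)).mulVec y with hv_def
  have hlip : ∀ s : ℝ, LipschitzWith C.toNNReal (v s) := by
    intro s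
    have h1 : LipschitzWith ‖Φ (A (c s))‖₊ (v s) := by
      have h3 : v s = ⇑(Φ (A (c s))) := by funext y; simp [hv_def, hΦapp]
      rw [h3]; exact (Φ _).lipschitz
    apply h1.weaken
    rw [← NNReal.coe_le_coe, coe_nnnorm, Real.coe_toNNReal _ hC0]
    exact hC _ (hcmem s)
  have key : EqOn f g (Icc a b) := by
    apply ODE_solution_unique_of_mem_Icc (v := v) (s := fun _ => univ)
      (fun s _ => (hlip s).lipschitzOnWith) ht₀
    · exact fun s hs => (hf s).continuousAt.continuousWithinAt
    · intro s hs
      have := hf s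
      rwa [show (A s).mulVec (f s) = v s (f s) by
        simp [hv_def, hc s (Ioo_subset_Icc_self hs)]] at this
    · exact fun s _ => trivial
    · exact fun s hs => (hg s).continuousAt.continuousWithinAt
    · intro s hs
      have := hg s
      rwa [show (A s).mulVec (g s) = v s (g s) by
        simp [hv_def, hc s (Ioo_subset_Icc_self hs)]] at this
    · exact fun s _ => trivial
    · exact h0
  exact key (Ioo_subset_Icc_self ht)


lemma dot_adjoint_const {n : ℕ} (A : ℝ → Matrix (Fin n) (Fin n) ℝ)
    (f g : ℝ → Fin n → ℝ)
    (hf : ∀ t, HasDerivAt f ((A t).mulVec (f t)) t)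
    (hg : ∀ t, HasDerivAt g (-(A t)ᵀ.mulVec (g t)) t)
    (s t : ℝ) : f s ⬝ᵥ g s = f t ⬝ᵥ g t := by
  have hd : ∀ u : ℝ, HasDerivAt (fun r => f r ⬝ᵥ g r) 0 u := by
    intro u
    have hfc := hasDerivAt_pi.mp (hf u)
    have hgc := hasDerivAt_pi.mp (hg u)
    have h1 : HasDerivAt (fun r => ∑ i, f r i * g r i)
        (∑ i, (((A u).mulVec (f u)) i * g u i + f u i * ((-(A u)ᵀ.mulVec (g u))) i)) u :=
      HasDerivAt.fun_sum (fun i _ => (hfc i).mul (hgc i))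
    have h2 : (∑ i, (((A u).mulVec (f u)) i * g u i + f u i * ((-(A u)ᵀ.mulVec (g u))) i)) = 0 := by
      have e1 : ∀ i, ((A u).mulVec (f u)) i * g u i = ∑ j, A u i j * f u j * g u i := by
        intro i; simp [Matrix.mulVec, dotProduct, Finset.sum_mul]
      have e2 : ∀ i, f u i * ((-(A u)ᵀ.mulVec (g u))) i = -∑ j, A u j i * f u i * g u j := by
        intro i
        simp only [Pi.neg_apply, Matrix.mulVec, dotProduct, Matrix.transpose_apply,
          mul_neg, Finset.mul_sum, neg_inj]
        exact Finset.sum_congr rfl fun j _ => by ring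
      simp only [e1, e2, Finset.sum_add_distrib, Finset.sum_neg_distrib]
      have hcomm : ∑ x : Fin n, ∑ j : Fin n, A u j x * f u x * g u j
          = ∑ x : Fin n, ∑ j : Fin n, A u x j * f u j * g u x := Finset.sum_comm
      rw [hcomm, add_neg_cancel]
    have h3 : (fun r => f r ⬝ᵥ g r) = fun r => ∑ i, f r i * g r i := by
      funext r; simp [dotProduct]
    rw [h3, ← h2]; exact h1
  have hdiff : Differentiable ℝ (fun r => f r ⬝ᵥ g r) := fun u => (hd u).differentiableAt
  have := is_const_of_deriv_eq_zero hdiff (fun u => (hd u).deriv) s t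
  exact this

end Aux

/-- Let `y₁, …, y_{n-1}` be linearly independent solutions of `ẏ = A(t)y` whose values
at `θ₀` are orthogonal to `z₀(θ₀)`. Then `Y₁(θ) = (y₁(θ)|…|y_{n-1}(θ))` satisfies
`Y₁(θ+T) = Y₁(θ) A_θ` for some matrix `A_θ` whose eigenvalues are the nontrivial
Floquet multipliers `μ₂, …, μₙ` (equivalently, `charpoly Y(T) = (X - 1)·charpoly A_θ`). -/
theorem tube_matrix_monodromy {m : ℕ}
    (T : ℝ) (hT : 0 < T)
    (A : ℝ → Matrix (Fin (m + 1)) (Fin (m + 1)) ℝ)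
    (hAcont : Continuous fun p : ℝ × (Fin (m + 1) → ℝ) => (A p.1).mulVec p.2)
    (hAper : ∀ t, A (t + T) = A t)
    (Y : ℝ → Matrix (Fin (m + 1)) (Fin (m + 1)) ℝ)
    (hY : ∀ (v : Fin (m + 1) → ℝ) (t : ℝ),
      HasDerivAt (fun s => (Y s).mulVec v) ((A t).mulVec ((Y t).mulVec v)) t)
    (hY0 : Y 0 = 1)
    -- `ẋ₀` : a nontrivial `T`-periodic solution of the system
    (x₀' : ℝ → Fin (m + 1) → ℝ)
    (hx₀'sol : ∀ t, HasDerivAt x₀' ((A t).mulVec (x₀' t)) t)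
    (hx₀'per : ∀ t, x₀' (t + T) = x₀' t)
    -- `μ₁ = 1` is a simple Floquet multiplier with eigenvector `ẋ₀(0)` …
    (heigvec : (Y T).mulVec (x₀' 0) = x₀' 0) (hne : x₀' 0 ≠ 0)
    (hsimple : ((Y T).charpoly.map (algebraMap ℝ ℂ)).rootMultiplicity 1 = 1)
    -- … and all other Floquet multipliers have modulus `< 1`
    (hspec : ∀ μ : ℂ, μ ≠ 1 → ((Y T).charpoly.map (algebraMap ℝ ℂ)).IsRoot μ → ‖μ‖ < 1)
    -- `z₀` : the normalized `T`-periodic adjoint solution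
    (z₀ : ℝ → Fin (m + 1) → ℝ)
    (hz₀ : ∀ t, HasDerivAt z₀ (-(A t)ᵀ.mulVec (z₀ t)) t)
    (hz₀per : ∀ t, z₀ (t + T) = z₀ t)
    (hnorm : ∀ t, x₀' t ⬝ᵥ z₀ t = 1)
    -- the chosen solutions `y₁, …, y_{n-1}`
    (θ₀ : ℝ) (ys : Fin m → ℝ → Fin (m + 1) → ℝ)
    (hys : ∀ (k : Fin m) (t : ℝ), HasDerivAt (ys k) ((A t).mulVec (ys k t)) t)
    (horth : ∀ k : Fin m, ys k θ₀ ⬝ᵥ z₀ θ₀ = 0)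
    (hindep : LinearIndependent ℝ (fun k : Fin m => ys k θ₀)) :
    ∀ θ : ℝ, ∃ Aθ : Matrix (Fin m) (Fin m) ℝ,
      (Matrix.of fun i k => ys k (θ + T) i : Matrix (Fin (m + 1)) (Fin m) ℝ) =
        (Matrix.of fun i k => ys k θ i : Matrix (Fin (m + 1)) (Fin m) ℝ) * Aθ ∧
      (Y T).charpoly = (X - C 1) * Aθ.charpoly := by
  intro θ
  have huniq := linODE_unique A hAcont
  -- every solution is propagated by Y
  have hsol : ∀ f : ℝ → Fin (m + 1) → ℝ, (∀ t, HasDerivAt f ((A t).mulVec (f t)) t) →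
      ∀ t, f t = (Y t).mulVec (f 0) := by
    intro f hf t
    exact huniq f (fun s => (Y s).mulVec (f 0)) hf (fun s => hY (f 0) s) 0
      (by simp [hY0]) t
  -- injectivity of the flow
  have hinj : ∀ t : ℝ, Function.Injective ((Y t).mulVec) := by
    intro t w1 w2 hw
    have h := huniq (fun s => (Y s).mulVec w1) (fun s => (Y s).mulVec w2)
      (fun s => hY w1 s) (fun s => hY w2 s) t hw 0
    simpa [hY0, Matrix.one_mulVec] using h
  -- semigroup property from periodicity
  have hYmul : ∀ (w : Fin (m + 1) → ℝ) (t : ℝ),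
      (Y (t + T)).mulVec w = (Y t).mulVec ((Y T).mulVec w) := by
    intro w t
    have hshift : ∀ u : ℝ, HasDerivAt (fun s => (Y (s + T)).mulVec w)
        ((A u).mulVec ((Y (u + T)).mulVec w)) u := by
      intro u
      have h1 := (hY w (u + T)).scomp u ((hasDerivAt_id u).add_const T)
      simp only [one_smul] at h1
      rwa [hAper] at h1
    exact huniq (fun s => (Y (s + T)).mulVec w) (fun s => (Y s).mulVec ((Y T).mulVec w))
      hshift (fun s => hY _ s) 0 (by simp [hY0]) t
  -- orthogonality at all times
  have horthall : ∀ (k : Fin m) (t : ℝ), ys k t ⬝ᵥ z₀ t = 0 := fun k t =>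
    (dot_adjoint_const A (ys k) z₀ (hys k) hz₀ t θ₀).trans (horth k)
  -- dot product with z₀ t as a linear map
  let φ : ℝ → ((Fin (m + 1) → ℝ) →ₗ[ℝ] ℝ) := fun t =>
    { toFun := fun w => w ⬝ᵥ z₀ t
      map_add' := fun x y => add_dotProduct x y (z₀ t)
      map_smul' := fun c x => smul_dotProduct c x (z₀ t) }
  have hφapp : ∀ (t : ℝ) (w : Fin (m + 1) → ℝ), φ t w = w ⬝ᵥ z₀ t := fun _ _ => rfl
  -- linear independence of the ys at every time
  have hys0 : ∀ (k : Fin m) (t : ℝ), ys k t = (Y t).mulVec (ys k 0) := fun k t =>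
    hsol (ys k) (hys k) t
  have hx₀Y : ∀ t : ℝ, x₀' t = (Y t).mulVec (x₀' 0) := hsol x₀' hx₀'sol
  have hind : ∀ t : ℝ, LinearIndependent ℝ (fun k : Fin m => ys k t) := by
    have hv : LinearIndependent ℝ (fun k : Fin m => ys k 0) := by
      apply LinearIndependent.of_comp (Matrix.mulVecLin (Y θ₀))
      have he : (⇑(Matrix.mulVecLin (Y θ₀)) ∘ fun k : Fin m => ys k 0)
          = fun k : Fin m => ys k θ₀ := by
        funext k; simp [Matrix.mulVecLin_apply, ← hys0]
      rw [he]; exact hindep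
    intro t
    have he : (fun k : Fin m => ys k t) = ⇑(Matrix.mulVecLin (Y t)) ∘ fun k : Fin m => ys k 0 := by
      funext k; simp [Matrix.mulVecLin_apply, ← hys0]
    rw [he]
    exact hv.map' _ (LinearMap.ker_eq_bot.mpr (hinj t))
  -- full family is independent
  have hbind : ∀ t : ℝ, LinearIndependent ℝ
      (Fin.cons (x₀' t) (fun k : Fin m => ys k t) : Fin (m + 1) → (Fin (m + 1) → ℝ)) := by
    intro t
    apply (hind t).fin_cons
    intro hmem
    have hker : Submodule.span ℝ (Set.range fun k : Fin m => ys k t) ≤ LinearMap.ker (φ t) := by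
      rw [Submodule.span_le]
      rintro _ ⟨k, rfl⟩
      exact LinearMap.mem_ker.mpr ((hφapp t _).trans (horthall k t))
    have h1 : (φ t) (x₀' t) = 0 := hker hmem
    have h2 : (φ t) (x₀' t) = 1 := (hφapp t _).trans (hnorm t)
    rw [h1] at h2; exact zero_ne_one h2
  have hcard : Fintype.card (Fin (m + 1)) = Module.finrank ℝ (Fin (m + 1) → ℝ) := by simp
  -- basis at time θ
  let Bθ : Module.Basis (Fin (m + 1)) ℝ (Fin (m + 1) → ℝ) :=
    basisOfLinearIndependentOfCardEqFinrank (hbind θ) hcard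
  have hBθ : ∀ i, Bθ i = (Fin.cons (x₀' θ) (fun k : Fin m => ys k θ) : Fin (m+1) → _) i := by
    intro i; simp [Bθ]
  set Aθ : Matrix (Fin m) (Fin m) ℝ :=
    Matrix.of (fun j k => Bθ.repr (ys k (θ + T)) (Fin.succ j)) with hAθ
  -- the 0-coordinate of ys k (θ+T) vanishes
  have hrepr0 : ∀ k : Fin m, Bθ.repr (ys k (θ + T)) 0 = 0 := by
    intro k
    have hφ0 : (φ θ) (Bθ 0) = 1 := by
      rw [hφapp, hBθ 0]; simpa using hnorm θ
    have hφs : ∀ j : Fin m, (φ θ) (Bθ (Fin.succ j)) = 0 := by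
      intro j; rw [hφapp, hBθ]; simpa using horthall j θ
    have h1 : (φ θ) (ys k (θ + T)) = 0 := by
      rw [hφapp]
      have h2 := horthall k (θ + T)
      rw [hz₀per] at h2
      exact h2
    rw [← Bθ.sum_repr (ys k (θ + T)), map_sum, Fin.sum_univ_succ] at h1
    simp only [LinearMap.map_smul, smul_eq_mul, hφ0, hφs, mul_zero, mul_one,
      Finset.sum_const_zero, add_zero] at h1
    exact h1
  -- expansion of ys k (θ+T)
  have hexp : ∀ k : Fin m, ys k (θ + T) = ∑ j : Fin m, Aθ j k • ys j θ := by
    intro k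
    have h1 := Bθ.sum_repr (ys k (θ + T))
    rw [Fin.sum_univ_succ, hrepr0 k, zero_smul, zero_add] at h1
    rw [← h1]
    refine Finset.sum_congr rfl fun j _ => ?_
    rw [hBθ]
    simp [hAθ]
  refine ⟨Aθ, ?_, ?_⟩
  · ext i k
    have h1 := congrFun (hexp k) i
    simp only [Finset.sum_apply, Pi.smul_apply, smul_eq_mul] at h1
    rw [Matrix.mul_apply]
    simp only [Matrix.of_apply]
    rw [h1]
    exact Finset.sum_congr rfl fun j _ => mul_comm _ _
  · -- charpoly identity
    -- action of Y T on the initial values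
    have hYT : ∀ k : Fin m, (Y T).mulVec (ys k 0) = ∑ j : Fin m, Aθ j k • ys j 0 := by
      intro k
      apply hinj θ
      rw [← hYmul (ys k 0) θ, ← hys0 k (θ + T), hexp k]
      have hlin : (Y θ).mulVec (∑ j : Fin m, Aθ j k • ys j 0)
          = ∑ j : Fin m, Aθ j k • (Y θ).mulVec (ys j 0) := by
        rw [show (Y θ).mulVec = ⇑((Y θ).mulVecLin) from rfl, map_sum]
        simp only [LinearMap.map_smul]
      rw [hlin]
      exact Finset.sum_congr rfl fun j _ => by rw [← hys0 j θ]
    -- the basis at time 0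
    let B0 : Module.Basis (Fin (m + 1)) ℝ (Fin (m + 1) → ℝ) :=
      basisOfLinearIndependentOfCardEqFinrank (hbind 0) hcard
    have hB0 : ∀ i, B0 i = (Fin.cons (x₀' 0) (fun k : Fin m => ys k 0) : Fin (m+1) → _) i := by
      intro i; simp [B0]
    -- the block matrix
    set D : Matrix (Fin (m + 1)) (Fin (m + 1)) ℝ := Matrix.of fun i j =>
      (Fin.cons (Pi.single (0 : Fin (m + 1)) (1 : ℝ))
        (fun k : Fin m => Fin.cons (0 : ℝ) (fun j' : Fin m => Aθ j' k)) :
        Fin (m + 1) → Fin (m + 1) → ℝ) j i with hD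
    have hD00 : D 0 0 = 1 := by simp [hD]
    have hDs0 : ∀ i : Fin m, D (Fin.succ i) 0 = 0 := by
      intro i; simp [hD, Pi.single_eq_of_ne (Fin.succ_ne_zero i)]
    have hD0s : ∀ k : Fin m, D 0 (Fin.succ k) = 0 := by
      intro k; simp [hD]
    have hDss : ∀ i k : Fin m, D (Fin.succ i) (Fin.succ k) = Aθ i k := by
      intro i k; simp [hD]
    -- D is the matrix of Y T in the basis B0
    have hmat : LinearMap.toMatrix B0 B0 (Matrix.toLin' (Y T)) = D := by
      ext i j
      rw [LinearMap.toMatrix_apply]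
      induction j using Fin.cases with
      | zero =>
        have he : Matrix.toLin' (Y T) (B0 0) = B0 0 := by
          rw [hB0 0]
          simp only [Fin.cons_zero, Matrix.toLin'_apply]
          exact heigvec
        rw [he, Module.Basis.repr_self]
        induction i using Fin.cases with
        | zero => rw [hD00]; simp
        | succ i' =>
          rw [hDs0 i', Finsupp.single_apply, if_neg (Ne.symm (Fin.succ_ne_zero i'))]
      | succ k =>
        have he : Matrix.toLin' (Y T) (B0 (Fin.succ k))
            = ∑ j : Fin m, Aθ j k • B0 (Fin.succ j) := by
          rw [hB0]
          simp only [Fin.cons_succ, Matrix.toLin'_apply]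
          rw [hYT k]
          exact Finset.sum_congr rfl fun j _ => by rw [hB0, Fin.cons_succ]
        rw [he, map_sum]
        simp only [_root_.map_smul, Module.Basis.repr_self]
        rw [Finsupp.finset_sum_apply]
        simp only [Finsupp.smul_apply, Finsupp.single_apply, smul_eq_mul]
        induction i using Fin.cases with
        | zero =>
          rw [hD0s k]
          exact Finset.sum_eq_zero fun j _ => by
            simp [(Fin.succ_ne_zero j)]
        | succ i' =>
          rw [hDss i' k]
          rw [Finset.sum_eq_single i']
          · simp
          · intro j _ hji
            simp [Fin.succ_inj, hji]
          · intro h; exact absurd (Finset.mem_univ i') h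
    -- charpoly of Y T equals charpoly of D
    have hc1 : (Y T).charpoly = D.charpoly := by
      have e1 : (Y T).charpoly = (LinearMap.toMatrix' (Matrix.toLin' (Y T))).charpoly := by
        rw [LinearMap.toMatrix'_toLin']
      rw [e1, ← LinearMap.toMatrix_eq_toMatrix', LinearMap.charpoly_toMatrix,
        ← LinearMap.charpoly_toMatrix (Matrix.toLin' (Y T)) B0, hmat]
    -- block determinant computation
    have hc2 : D.charpoly = (X - C 1) * Aθ.charpoly := by
      rw [Matrix.charpoly, Matrix.det_succ_column_zero, Fin.sum_univ_succ]
      have hzero : ∀ i : Fin m,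
          (-1 : ℝ[X]) ^ ((Fin.succ i : Fin (m + 1)) : ℕ) * charmatrix D (Fin.succ i) 0 *
            ((charmatrix D).submatrix (Fin.succAbove (Fin.succ i)) Fin.succ).det = 0 := by
        intro i
        rw [charmatrix_apply_ne D _ _ (Fin.succ_ne_zero i), hDs0 i]
        simp
      rw [Finset.sum_eq_zero fun i _ => hzero i, add_zero]
      have hsub : (charmatrix D).submatrix (Fin.succAbove 0) Fin.succ = charmatrix Aθ := by
        ext i j
        rw [Fin.succAbove_zero, Matrix.submatrix_apply]
        by_cases h : i = j
        · subst h
          rw [charmatrix_apply_eq, charmatrix_apply_eq, hDss]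
        · rw [charmatrix_apply_ne Aθ _ _ h,
            charmatrix_apply_ne D _ _ (fun hc => h (Fin.succ_inj.mp hc)), hDss]
      rw [charmatrix_apply_eq, hD00, hsub]
      simp [Matrix.charpoly]
    exact hc1.trans hc2
end
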